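/- For n ≥ 5 the constant c(n) := ((n-2)/2) c₀² ∫_{ℝⁿ} (|x|²-1)/(1+|x|²)^{n-1} dx is strictly positive, where c₀ = (n(n-2))^{(n-2)/4}. -/

import Mathlib

open Real MeasureTheory

section Aux
open Set

lemma radial_identity1 (m : ℕ) (x : ℝ) (hx : 0 < x) :
    |(-(x^2)⁻¹)| * ((x⁻¹) ^ (m+4) * (((x⁻¹)^2 - 1)/(1+(x⁻¹)^2)^(m+4))) =
      x ^ m * ((1 - x^2)/(1+x^2)^(m+4)) := by
  have hx0 : x ≠ 0 := hx.ne'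
  have h1 : (0:ℝ) < 1 + x^2 := by positivity
  rw [abs_neg, abs_of_nonneg (by positivity : (0:ℝ) ≤ (x^2)⁻¹)]
  have h2 : (1 + (x⁻¹)^2) = (1+x^2)/x^2 := by field_simp; ring
  rw [h2, div_pow]
  field_simp
  rw [div_pow, one_pow]
  field_simp
  ring

lemma radial_identity2 (m : ℕ) (x : ℝ) :
    x ^ (m+4) * ((x^2 - 1)/(1+x^2)^(m+4)) + x ^ m * ((1 - x^2)/(1+x^2)^(m+4)) =
      x ^ m * ((x^2-1)^2/(1+x^2)^(m+3)) := by
  have h1 : (0:ℝ) < 1 + x^2 := by positivity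
  rw [pow_succ (1+x^2) (m+3)] at *
  field_simp
  ring

lemma radial_pos (m : ℕ) :
    0 < ∫ r in Ioi (0:ℝ), r ^ (m+4) * ((r^2 - 1)/(1+r^2)^(m+4)) := by
  set g : ℝ → ℝ := fun r => r ^ (m+4) * ((r^2 - 1)/(1+r^2)^(m+4)) with hg_def
  set h : ℝ → ℝ := fun r => r ^ m * ((1 - r^2)/(1+r^2)^(m+4)) with hh_def
  set p : ℝ → ℝ := fun r => r ^ m * ((r^2-1)^2/(1+r^2)^(m+3)) with hp_def
  have hg_cont : Continuous g := by
    apply (continuous_pow _).mul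
    exact ((continuous_pow 2).sub continuous_const).div
      (((continuous_const.add (continuous_pow 2)).pow _)) (fun x => by positivity)
  -- integrability of g on Ioi 0
  have hg_int : IntegrableOn g (Ioi 0) := by
    rw [← Ioc_union_Ioi_eq_Ioi (zero_le_one' ℝ)]
    apply IntegrableOn.union
    · exact hg_cont.integrableOn_Ioc
    · refine Integrable.mono' ((integrableOn_Ioi_rpow_of_lt
        (show -((m:ℝ)+2) < -1 by push_cast; linarith) one_pos))
        hg_cont.aestronglyMeasurable ?_
      filter_upwards [ae_restrict_mem measurableSet_Ioi] with x hx
      have hx1 : (1:ℝ) < x := hx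
      have hx0 : (0:ℝ) < x := lt_trans one_pos hx1
      have h1 : (0:ℝ) < 1 + x^2 := by positivity
      have hge : (0:ℝ) ≤ g x := by
        apply mul_nonneg (by positivity)
        apply div_nonneg (by nlinarith) (by positivity)
      rw [Real.norm_eq_abs, abs_of_nonneg hge]
      have hcast : x ^ (-((m:ℝ)+2)) = (x ^ (m+2))⁻¹ := by
        rw [show -((m:ℝ)+2) = -((m+2 : ℕ):ℝ) by push_cast; ring, rpow_neg hx0.le,
          rpow_natCast]
      rw [hcast]
      calc g x ≤ x ^ (m+4) * ((1+x^2)/(1+x^2)^(m+4)) := by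
            apply mul_le_mul_of_nonneg_left _ (by positivity)
            apply div_le_div_of_nonneg_right (by linarith) (by positivity)
          _ = x ^ (m+4) / (1+x^2)^(m+3) := by
            rw [pow_succ (1+x^2) (m+3)]
            field_simp
          _ ≤ x ^ (m+4) / (x^2)^(m+3) := by
            apply div_le_div_of_nonneg_left (by positivity) (by positivity)
            apply pow_le_pow_left₀ (by positivity) (by linarith)
          _ = (x ^ (m+2))⁻¹ := by
            rw [← pow_mul]
            field_simp
            ring
  -- substitution r ↦ r⁻¹
  have himg : (fun x : ℝ => x⁻¹) '' Ioi 0 = Ioi 0 := by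
    ext x
    constructor
    · rintro ⟨y, hy, rfl⟩; exact mem_Ioi.2 (inv_pos.2 (mem_Ioi.1 hy))
    · intro hx; exact ⟨x⁻¹, mem_Ioi.2 (inv_pos.2 (mem_Ioi.1 hx)), inv_inv x⟩
  have hderiv : ∀ x ∈ Ioi (0:ℝ),
      HasDerivWithinAt (fun x : ℝ => x⁻¹) (-(x^2)⁻¹) (Ioi 0) x :=
    fun x hx => (hasDerivAt_inv (ne_of_gt hx)).hasDerivWithinAt
  have hinj : InjOn (fun x : ℝ => x⁻¹) (Ioi 0) := fun x _ y _ hxy => inv_injective hxy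
  have hsub : ∫ r in Ioi (0:ℝ), g r = ∫ r in Ioi (0:ℝ), h r := by
    conv_lhs => rw [← himg]
    rw [integral_image_eq_integral_abs_deriv_smul measurableSet_Ioi hderiv hinj g]
    apply setIntegral_congr_fun measurableSet_Ioi
    intro x hx
    simpa [hg_def, hh_def, smul_eq_mul] using radial_identity1 m x hx
  have hh_int : IntegrableOn h (Ioi 0) := by
    have := (integrableOn_image_iff_integrableOn_abs_deriv_smul measurableSet_Ioi
      hderiv hinj g).mp (by rw [himg]; exact hg_int)
    refine this.congr_fun (fun x hx => ?_) measurableSet_Ioi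
    simpa [hg_def, hh_def, smul_eq_mul] using radial_identity1 m x hx
  have hp_int : IntegrableOn p (Ioi 0) :=
    IntegrableOn.congr_fun (hg_int.add hh_int) (fun x _ => radial_identity2 m x) measurableSet_Ioi
  have hsum : (∫ r in Ioi (0:ℝ), g r) + (∫ r in Ioi (0:ℝ), h r)
      = ∫ r in Ioi (0:ℝ), p r := by
    rw [← integral_add hg_int hh_int]
    exact setIntegral_congr_fun measurableSet_Ioi (fun x _ => radial_identity2 m x)
  have hp_pos : 0 < ∫ r in Ioi (0:ℝ), p r := by
    rw [setIntegral_pos_iff_support_of_nonneg_ae]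
    · refine lt_of_lt_of_le ?_ (measure_mono (show Ioi (2:ℝ) ⊆ Function.support p ∩ Ioi 0 from ?_))
      · rw [Real.volume_Ioi]; exact ENNReal.zero_lt_top
      · intro x hx
        have hx2 : (2:ℝ) < x := hx
        have hx0 : (0:ℝ) < x := by linarith
        constructor
        · simp only [hp_def, Function.mem_support]
          have : (0:ℝ) < x ^ m * ((x^2-1)^2/(1+x^2)^(m+3)) := by
            apply mul_pos (by positivity)
            exact div_pos (pow_pos (by nlinarith) 2) (by positivity)
          exact ne_of_gt this
        · exact hx0
    · filter_upwards [ae_restrict_mem measurableSet_Ioi] with x hx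
      have hx0 : (0:ℝ) < x := hx
      positivity
    · exact hp_int
  linarith [hsub, hsum, hp_pos]

lemma euclid_integral_pos (m : ℕ) :
    0 < ∫ x : EuclideanSpace ℝ (Fin (m+5)), (‖x‖ ^ 2 - 1) / (1 + ‖x‖ ^ 2) ^ (m+5 - 1) := by
  have hrad := radial_pos m
  have key := integral_fun_norm_addHaar (volume : Measure (EuclideanSpace ℝ (Fin (m+5))))
    (fun y : ℝ => (y^2 - 1)/(1+y^2)^(m+5-1))
  rw [finrank_euclideanSpace_fin] at key
  rw [show (∫ x : EuclideanSpace ℝ (Fin (m+5)), (‖x‖ ^ 2 - 1) / (1 + ‖x‖ ^ 2) ^ (m+5 - 1))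
      = ∫ x : EuclideanSpace ℝ (Fin (m+5)), (fun y : ℝ => (y^2 - 1)/(1+y^2)^(m+5-1)) ‖x‖
      from rfl, key]
  have : (∫ y in Ioi (0:ℝ), y ^ (m+5-1) • (fun y : ℝ => (y^2 - 1)/(1+y^2)^(m+5-1)) y)
      = ∫ r in Ioi (0:ℝ), r ^ (m+4) * ((r^2 - 1)/(1+r^2)^(m+4)) := by
    apply setIntegral_congr_fun measurableSet_Ioi
    intro x _
    simp [smul_eq_mul, show m+5-1 = m+4 from rfl]
  rw [this, nsmul_eq_mul, smul_eq_mul]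
  have hb : 0 < (volume (Metric.ball (0:EuclideanSpace ℝ (Fin (m+5))) 1)).toReal := by
    apply ENNReal.toReal_pos (Metric.measure_ball_pos _ _ one_pos).ne'
      measure_ball_lt_top.ne
  positivity

end Aux

/-- For `n ≥ 5` the constant
`c(n) = ((n-2)/2) c₀² ∫_{ℝⁿ} (|x|²-1)/(1+|x|²)^{n-1} dx` is strictly positive. -/
theorem cn_pos (n : ℕ) (hn : 5 ≤ n) :
    0 < (((n : ℝ) - 2) / 2) * (((n : ℝ) * ((n : ℝ) - 2)) ^ (((n : ℝ) - 2) / 4)) ^ 2 *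
      ∫ x : EuclideanSpace ℝ (Fin n), (‖x‖ ^ 2 - 1) / (1 + ‖x‖ ^ 2) ^ (n - 1) := by
  obtain ⟨m, rfl⟩ : ∃ m, n = m + 5 := ⟨n - 5, by omega⟩
  have hm : (0:ℝ) ≤ m := Nat.cast_nonneg m
  have h1 : (0:ℝ) < ((↑(m+5):ℝ) - 2) / 2 := by push_cast; linarith
  exact mul_pos (mul_pos h1 (pow_pos (Real.rpow_pos_of_pos (by push_cast; nlinarith) _) 2))
    (euclid_integral_pos m)
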